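/- arXiv:1503.02163 — 2 statements merged into one kernel-verified Lean document; each statement's English description precedes it below -/
import Mathlib

section
/- Let 𝒳 be a set, x_1,...,x_n, x′_1,...,x′_n ∈ 𝒳, and let f, g : 𝒳 → [0,1]. Let Φ : ℝⁿ → ℝ be twice differentiable and satisfy ‖∂_k Φ‖_∞ ≤ L for every k ∈ {1,...,n} and √(Σ_{k=1}^n ‖Σ_{l : l ≠ k} (∂_{lk} Φ)²‖_∞) ≤ M. For σ ∈ {0,1}ⁿ set Z(σ) = Y_f(σ) − Y_g(σ), where Y_f(σ) = Φ( Σ_i [σ_i f(x_i) + (1−σ_i) f(x′_i)] e_i ) − Φ( Σ_i [σ_i f(x′_i) + (1−σ_i) f(x_i)] e_i ) and Y_g is defined analogously. Let Z_k(σ, b) denote Z evaluated at the vector obtained from σ by replacing its k-th coordinate by b ∈ {0,1}. Then for every σ ∈ {0,1}ⁿ, Σ_{k=1}^n ( Z_k(σ,1) − Z_k(σ,0) )² ≤ 16 (M² + L²) d(f,g)², where d(f,g)² = Σ_{i=1}^n (f(x_i) − g(x_i))² + (f(x′_i) − g(x′_i))². -/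
open Finset

/-- `∂_k Φ`, the partial derivative of `Φ : ℝⁿ → ℝ` with respect to the `k`-th variable. -/
noncomputable def pderiv1 {n : ℕ} (Φ : (Fin n → ℝ) → ℝ) (k : Fin n) (x : Fin n → ℝ) : ℝ :=
  fderiv ℝ Φ x (Pi.single k 1)

/-- `∂_{lk} Φ`, the second mixed partial derivative of `Φ` w.r.t. the `k`-th and `l`-th
variables. -/
noncomputable def pderiv2 {n : ℕ} (Φ : (Fin n → ℝ) → ℝ) (l k : Fin n) (x : Fin n → ℝ) : ℝ :=
  fderiv ℝ (fun y => pderiv1 Φ k y) x (Pi.single l 1)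

/-- The process `Y_f(σ) = Φ(∑_i [σ_i f(x_i) + (1-σ_i) f(x'_i)] e_i)
- Φ(∑_i [σ_i f(x'_i) + (1-σ_i) f(x_i)] e_i)`, with `σ ∈ {0,1}ⁿ` encoded by `Fin n → Bool`. -/
noncomputable def Yproc {𝒳 : Type*} {n : ℕ} (Φ : (Fin n → ℝ) → ℝ)
    (x x' : Fin n → 𝒳) (f : 𝒳 → ℝ) (σ : Fin n → Bool) : ℝ :=
  Φ (fun i => if σ i then f (x i) else f (x' i)) -
    Φ (fun i => if σ i then f (x' i) else f (x i))

lemma mvt_abs {F F' : ℝ → ℝ} {C : ℝ}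
    (hd : ∀ t, HasDerivAt F (F' t) t) (hb : ∀ t, |F' t| ≤ C) (a b : ℝ) :
    |F b - F a| ≤ C * |b - a| := by
  have := Convex.norm_image_sub_le_of_norm_hasDerivWithin_le
    (f := F) (f' := F') (s := Set.univ) (C := C)
    (fun t _ => (hd t).hasDerivWithinAt) (fun t _ => hb t) convex_univ
    (Set.mem_univ a) (Set.mem_univ b)
  simpa [Real.norm_eq_abs] using this

lemma hasDerivAt_update' {n : ℕ} (w : Fin n → ℝ) (k : Fin n) (t : ℝ) :
    HasDerivAt (fun t => Function.update w k t) (Pi.single k (1:ℝ)) t := by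
  have h : (fun t : ℝ => Function.update w k t)
      = fun t => t • Pi.single k (1:ℝ) + Function.update w k 0 := by
    funext t i
    rcases eq_or_ne i k with rfl | h
    · simp
    · simp [Function.update_of_ne h, Pi.single_eq_of_ne h]
  rw [h]
  exact (((hasDerivAt_id t).smul_const (Pi.single k (1:ℝ) : Fin n → ℝ)).add_const _).congr_deriv (one_smul _ _)

lemma hasDerivAt_comp_update {n : ℕ} {Φ : (Fin n → ℝ) → ℝ} (hΦ : Differentiable ℝ Φ)
    (w : Fin n → ℝ) (k : Fin n) (t : ℝ) :
    HasDerivAt (fun t => Φ (Function.update w k t))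
      (pderiv1 Φ k (Function.update w k t)) t :=
  (hΦ _).hasFDerivAt.comp_hasDerivAt t (hasDerivAt_update' w k t)

lemma hasDerivAt_line {n : ℕ} {ψ : (Fin n → ℝ) → ℝ} (hψ : Differentiable ℝ ψ)
    (p d : Fin n → ℝ) (s : ℝ) :
    HasDerivAt (fun s => ψ (p + s • d)) (fderiv ℝ ψ (p + s • d) d) s := by
  have h1 : HasDerivAt (fun s : ℝ => p + s • d) d s := by
    simpa using ((hasDerivAt_id s).smul_const d).const_add p
  exact (hψ _).hasFDerivAt.comp_hasDerivAt s h1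

lemma fderiv_apply_sum {n : ℕ} {Φ : (Fin n → ℝ) → ℝ} (hΦ : Differentiable ℝ Φ)
    (z d : Fin n → ℝ) :
    fderiv ℝ Φ z d = ∑ l, d l * pderiv1 Φ l z := by
  have hd : d = ∑ l, d l • (Pi.single l (1:ℝ) : Fin n → ℝ) := by
    funext j
    simp [Pi.single_apply]
  conv_lhs => rw [hd]
  rw [map_sum]
  simp [pderiv1]

lemma pderiv2_symm {n : ℕ} {Φ : (Fin n → ℝ) → ℝ} (hΦ : Differentiable ℝ Φ)
    (hΦ2 : ∀ k, Differentiable ℝ (pderiv1 Φ k)) (l k : Fin n) (z : Fin n → ℝ) :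
    pderiv2 Φ l k z = pderiv2 Φ k l z := by
  have hrep : (fun y => fderiv ℝ Φ y) =
      fun y => ∑ m, pderiv1 Φ m y • (ContinuousLinearMap.proj (R := ℝ)
        (φ := fun _ : Fin n => ℝ) m) := by
    funext y
    ext h
    rw [fderiv_apply_sum hΦ]
    simp [mul_comm]
  have hdiff : Differentiable ℝ (fun y => fderiv ℝ Φ y) := by
    rw [hrep]
    exact Differentiable.fun_sum fun m _ => (hΦ2 m).smul_const _
  have key : ∀ a b : Fin n, pderiv2 Φ a b z
      = fderiv ℝ (fun y => fderiv ℝ Φ y) z (Pi.single a 1) (Pi.single b 1) := by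
    intro a b
    have hc := (ContinuousLinearMap.apply ℝ ℝ (Pi.single b (1:ℝ))
        : ((Fin n → ℝ) →L[ℝ] ℝ) →L[ℝ] ℝ).hasFDerivAt.comp z (hdiff z).hasFDerivAt
    have h2 := hc.fderiv
    simp only [pderiv2, pderiv1]
    rw [show (fun y => fderiv ℝ Φ y (Pi.single b (1:ℝ)))
        = (⇑(ContinuousLinearMap.apply ℝ ℝ (Pi.single b (1:ℝ))
          : ((Fin n → ℝ) →L[ℝ] ℝ) →L[ℝ] ℝ)) ∘ (fun y => fderiv ℝ Φ y) from rfl, h2]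
    rfl
  rw [key, key]
  exact second_derivative_symmetric (fun y => (hΦ y).hasFDerivAt)
    (hdiff z).hasFDerivAt (Pi.single l 1) (Pi.single k 1)

lemma coord_lipschitz {n : ℕ} {Φ : (Fin n → ℝ) → ℝ} (hΦ : Differentiable ℝ Φ)
    (k : Fin n) {L : ℝ} (hL : ∀ z, |pderiv1 Φ k z| ≤ L) (w : Fin n → ℝ) (a b : ℝ) :
    |Φ (Function.update w k a) - Φ (Function.update w k b)| ≤ L * |a - b| :=
  mvt_abs (fun t => hasDerivAt_comp_update hΦ w k t) (fun t => hL _) b a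

lemma cross_bound {n : ℕ} {Φ : (Fin n → ℝ) → ℝ} (hΦ : Differentiable ℝ Φ)
    (hΦ2 : ∀ k, Differentiable ℝ (pderiv1 Φ k))
    (k : Fin n) {Ck : ℝ} (hCk : ∀ z, ∑ l ∈ univ.erase k, (pderiv2 Φ l k z)^2 ≤ Ck)
    (U V : Fin n → ℝ) (a b : ℝ) :
    |(Φ (Function.update U k a) - Φ (Function.update U k b)) -
     (Φ (Function.update V k a) - Φ (Function.update V k b))| ≤
    Real.sqrt Ck * Real.sqrt (∑ l ∈ univ.erase k, (U l - V l)^2) * |a - b| := by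
  set d : Fin n → ℝ := fun l => if l = k then 0 else V l - U l with hdd
  set S := ∑ l ∈ univ.erase k, (U l - V l)^2 with hSdef
  have hS0 : 0 ≤ S := sum_nonneg fun _ _ => sq_nonneg _
  have hCk0 : 0 ≤ Ck := le_trans (sum_nonneg fun _ _ => sq_nonneg _) (hCk 0)
  have hdsq : ∑ l ∈ univ.erase k, (d l)^2 = S := by
    apply Finset.sum_congr rfl
    intro l hl
    have h : l ≠ k := Finset.ne_of_mem_erase hl
    simp only [hdd, if_neg h]
    ring
  have inner : ∀ p : Fin n → ℝ, ∀ t s : ℝ,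
      |fderiv ℝ Φ (Function.update p k t) d - fderiv ℝ Φ (Function.update p k s) d|
        ≤ Real.sqrt Ck * Real.sqrt S * |t - s| := by
    intro p t s
    have hder : ∀ t : ℝ,
        HasDerivAt (fun t => ∑ l, d l * pderiv1 Φ l (Function.update p k t))
          (∑ l, d l * pderiv2 Φ k l (Function.update p k t)) t := by
      intro t
      apply HasDerivAt.fun_sum
      intro l _
      exact ((hΦ2 l _).hasFDerivAt.comp_hasDerivAt t
        (hasDerivAt_update' p k t)).const_mul (d l)
    have hbound : ∀ t : ℝ,
        |∑ l, d l * pderiv2 Φ k l (Function.update p k t)|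
          ≤ Real.sqrt Ck * Real.sqrt S := by
      intro t
      have h1 : ∑ l, d l * pderiv2 Φ k l (Function.update p k t)
          = ∑ l ∈ univ.erase k, d l * pderiv2 Φ l k (Function.update p k t) := by
        rw [← Finset.sum_erase (univ : Finset (Fin n))
          (f := fun l => d l * pderiv2 Φ k l (Function.update p k t))
          (a := k) (by simp [hdd])]
        exact Finset.sum_congr rfl fun l hl => by rw [pderiv2_symm hΦ hΦ2 k l]
      rw [h1]
      have CS := Finset.sum_mul_sq_le_sq_mul_sq (univ.erase k) d
        (fun l => pderiv2 Φ l k (Function.update p k t))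
      have h2 : (∑ l ∈ univ.erase k, d l * pderiv2 Φ l k (Function.update p k t))^2
          ≤ S * Ck := by
        refine CS.trans ?_
        rw [hdsq]
        exact mul_le_mul_of_nonneg_left (hCk _) hS0
      calc |∑ l ∈ univ.erase k, d l * pderiv2 Φ l k (Function.update p k t)|
          = Real.sqrt ((∑ l ∈ univ.erase k, d l * pderiv2 Φ l k (Function.update p k t))^2) := by
            rw [Real.sqrt_sq_eq_abs]
        _ ≤ Real.sqrt (S * Ck) := Real.sqrt_le_sqrt h2
        _ = Real.sqrt Ck * Real.sqrt S := by rw [Real.sqrt_mul hS0, mul_comm]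
    have hfs : ∀ z : Fin n → ℝ, fderiv ℝ Φ z d = ∑ l, d l * pderiv1 Φ l z :=
      fun z => fderiv_apply_sum hΦ z d
    rw [hfs, hfs]
    exact mvt_abs hder hbound s t
  have keyid : ∀ (c : ℝ) (s : ℝ),
      Function.update U k c + s • d = Function.update (U + s • d) k c := by
    intro c s
    funext i
    rcases eq_or_ne i k with rfl | h
    · simp [hdd]
    · simp [Function.update_of_ne h, hdd, h]
  have houter : ∀ s : ℝ, HasDerivAt
      (fun s => Φ (Function.update U k a + s • d) - Φ (Function.update U k b + s • d))
      (fderiv ℝ Φ (Function.update U k a + s • d) d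
        - fderiv ℝ Φ (Function.update U k b + s • d) d) s :=
    fun s => (hasDerivAt_line hΦ _ d s).sub (hasDerivAt_line hΦ _ d s)
  have hob : ∀ s : ℝ, |fderiv ℝ Φ (Function.update U k a + s • d) d
      - fderiv ℝ Φ (Function.update U k b + s • d) d|
      ≤ Real.sqrt Ck * Real.sqrt S * |a - b| := by
    intro s
    rw [keyid a s, keyid b s]
    exact inner (U + s • d) a b
  have hm := mvt_abs houter hob 0 1
  have hU0 : ∀ c : ℝ, Function.update U k c + (0:ℝ) • d = Function.update U k c := by
    intro c; simp
  have hU1 : ∀ c : ℝ, Function.update U k c + (1:ℝ) • d = Function.update V k c := by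
    intro c
    funext i
    rcases eq_or_ne i k with rfl | h
    · simp [hdd]
    · simp only [Pi.add_apply, Pi.smul_apply, one_smul, Function.update_of_ne h, hdd,
        if_neg h]
      ring
  rw [hU0, hU0, hU1, hU1] at hm
  simp only [sub_zero, abs_one, mul_one] at hm
  calc |(Φ (Function.update U k a) - Φ (Function.update U k b)) -
      (Φ (Function.update V k a) - Φ (Function.update V k b))|
      = |(Φ (Function.update V k a) - Φ (Function.update V k b)) -
        (Φ (Function.update U k a) - Φ (Function.update U k b))| := abs_sub_comm _ _
    _ ≤ Real.sqrt Ck * Real.sqrt S * |a - b| := hm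

lemma pair_bound {n : ℕ} {Φ : (Fin n → ℝ) → ℝ} (hΦ : Differentiable ℝ Φ)
    (hΦ2 : ∀ k, Differentiable ℝ (pderiv1 Φ k))
    (k : Fin n) {L : ℝ} (hL : ∀ z, |pderiv1 Φ k z| ≤ L)
    {Ck : ℝ} (hCk : ∀ z, ∑ l ∈ univ.erase k, (pderiv2 Φ l k z)^2 ≤ Ck)
    (Wf Wg : Fin n → ℝ) (af bf ag bg : ℝ) :
    |(Φ (Function.update Wf k af) - Φ (Function.update Wf k bf)) -
     (Φ (Function.update Wg k ag) - Φ (Function.update Wg k bg))|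
    ≤ L * |af - ag| + L * |bf - bg| +
      Real.sqrt Ck * Real.sqrt (∑ l ∈ univ.erase k, (Wf l - Wg l)^2) * |ag - bg| := by
  have d1 := coord_lipschitz hΦ k hL Wf af ag
  have d2 := coord_lipschitz hΦ k hL Wf bf bg
  have d3 := cross_bound hΦ hΦ2 k hCk Wf Wg ag bg
  have hdec : (Φ (Function.update Wf k af) - Φ (Function.update Wf k bf)) -
      (Φ (Function.update Wg k ag) - Φ (Function.update Wg k bg))
      = ((Φ (Function.update Wf k af) - Φ (Function.update Wf k ag)) -
         (Φ (Function.update Wf k bf) - Φ (Function.update Wf k bg))) +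
        ((Φ (Function.update Wf k ag) - Φ (Function.update Wf k bg)) -
         (Φ (Function.update Wg k ag) - Φ (Function.update Wg k bg))) := by ring
  rw [hdec]
  refine (abs_add_le _ _).trans (add_le_add ((abs_sub _ _).trans (add_le_add d1 d2)) d3)

set_option maxHeartbeats 1000000 in
/-- With `Z(σ) = Y_f(σ) - Y_g(σ)`, if `Φ` is twice differentiable with
`‖∂_k Φ‖_∞ ≤ L` for all `k` and `√(∑_k ‖∑_{l ≠ k} (∂_{lk} Φ)²‖_∞) ≤ M`, then for every
`σ ∈ {0,1}ⁿ`, `∑_{k=1}^n (Z_k(σ,1) - Z_k(σ,0))² ≤ 16 (M² + L²) d(f,g)²`, where `Z_k(σ,b)`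
replaces the `k`-th coordinate of `σ` by `b` and
`d(f,g)² = ∑_i (f(x_i)-g(x_i))² + (f(x'_i)-g(x'_i))²`. -/
theorem statement4
    {𝒳 : Type*} {n : ℕ} (x x' : Fin n → 𝒳) (f g : 𝒳 → ℝ)
    (hf : ∀ y, f y ∈ Set.Icc (0 : ℝ) 1) (hg : ∀ y, g y ∈ Set.Icc (0 : ℝ) 1)
    (Φ : (Fin n → ℝ) → ℝ) (L M : ℝ)
    -- Φ is twice differentiable
    (hΦ : Differentiable ℝ Φ)
    (hΦ2 : ∀ k, Differentiable ℝ (pderiv1 Φ k))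
    -- ‖∂_k Φ‖_∞ ≤ L for every k
    (hL : ∀ k, ∀ x, |pderiv1 Φ k x| ≤ L)
    -- √(∑_k ‖∑_{l ≠ k} (∂_{lk} Φ)²‖_∞) ≤ M
    (hM : ∃ C : Fin n → ℝ,
      (∀ k, ∀ x, ∑ l ∈ Finset.univ.erase k, (pderiv2 Φ l k x) ^ 2 ≤ C k) ∧
      Real.sqrt (∑ k, C k) ≤ M)
    (σ : Fin n → Bool) :
    ∑ k : Fin n,
      ((Yproc Φ x x' f (Function.update σ k true) - Yproc Φ x x' g (Function.update σ k true))
        - (Yproc Φ x x' f (Function.update σ k false)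
            - Yproc Φ x x' g (Function.update σ k false))) ^ 2
      ≤ 16 * (M ^ 2 + L ^ 2) *
          ∑ i, ((f (x i) - g (x i)) ^ 2 + (f (x' i) - g (x' i)) ^ 2) := by
  obtain ⟨C, hC, hCM⟩ := hM
  set S := ∑ i, ((f (x i) - g (x i)) ^ 2 + (f (x' i) - g (x' i)) ^ 2) with hSdef
  have hS0 : 0 ≤ S := sum_nonneg fun i _ => by positivity
  have hC0 : ∀ k, 0 ≤ C k := fun k =>
    le_trans (sum_nonneg fun _ _ => sq_nonneg _) (hC k 0)
  have hM0 : 0 ≤ M := le_trans (Real.sqrt_nonneg _) hCM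
  have hCsum : ∑ k, C k ≤ M ^ 2 := by
    have h1 : Real.sqrt (∑ k, C k) ^ 2 = ∑ k, C k :=
      Real.sq_sqrt (Finset.sum_nonneg fun k _ => hC0 k)
    nlinarith [Real.sqrt_nonneg (∑ k, C k)]
  have key : ∀ k : Fin n,
      ((Yproc Φ x x' f (Function.update σ k true) - Yproc Φ x x' g (Function.update σ k true))
        - (Yproc Φ x x' f (Function.update σ k false)
            - Yproc Φ x x' g (Function.update σ k false))) ^ 2
      ≤ 16 * L ^ 2 * ((f (x k) - g (x k)) ^ 2 + (f (x' k) - g (x' k)) ^ 2)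
        + 8 * C k * S := by
    intro k
    have hL0 : 0 ≤ L := le_trans (abs_nonneg _) (hL k 0)
    have e1 : ∀ (p q : Fin n → ℝ) (b : Bool),
        (fun i => if (Function.update σ k b) i then p i else q i)
        = Function.update (fun i => if σ i then p i else q i) k
            (if b then p k else q k) := by
      intro p q b
      funext i
      rcases eq_or_ne i k with rfl | hik
      · simp
      · simp [Function.update_of_ne hik]
    have hY : ∀ (h : 𝒳 → ℝ) (b : Bool),
        Yproc Φ x x' h (Function.update σ k b)
        = Φ (Function.update (fun i => if σ i then h (x i) else h (x' i)) k
              (if b then h (x k) else h (x' k)))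
          - Φ (Function.update (fun i => if σ i then h (x' i) else h (x i)) k
              (if b then h (x' k) else h (x k))) := by
      intro h b
      unfold Yproc
      rw [e1 (fun i => h (x i)) (fun i => h (x' i)) b,
        e1 (fun i => h (x' i)) (fun i => h (x i)) b]
    set Uf : Fin n → ℝ := fun i => if σ i then f (x i) else f (x' i) with hUf
    set Vf : Fin n → ℝ := fun i => if σ i then f (x' i) else f (x i) with hVf
    set Ug : Fin n → ℝ := fun i => if σ i then g (x i) else g (x' i) with hUg
    set Vg : Fin n → ℝ := fun i => if σ i then g (x' i) else g (x i) with hVg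
    have hA : (Yproc Φ x x' f (Function.update σ k true)
        - Yproc Φ x x' g (Function.update σ k true))
        - (Yproc Φ x x' f (Function.update σ k false)
            - Yproc Φ x x' g (Function.update σ k false))
        = ((Φ (Function.update Uf k (f (x k))) - Φ (Function.update Uf k (f (x' k)))) -
           (Φ (Function.update Ug k (g (x k))) - Φ (Function.update Ug k (g (x' k)))))
          + ((Φ (Function.update Vf k (f (x k))) - Φ (Function.update Vf k (f (x' k)))) -
             (Φ (Function.update Vg k (g (x k))) - Φ (Function.update Vg k (g (x' k)))))
        := by
      rw [hY f true, hY f false, hY g true, hY g false]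
      simp only [if_true, if_false, Bool.false_eq_true, reduceIte]
      rw [← hUf, ← hVf, ← hUg, ← hVg]
      ring
    have hsubU : Real.sqrt (∑ l ∈ univ.erase k, (Uf l - Ug l)^2) ≤ Real.sqrt S := by
      apply Real.sqrt_le_sqrt
      refine le_trans (Finset.sum_le_sum ?_)
        (Finset.sum_le_sum_of_subset_of_nonneg (Finset.subset_univ _)
          (fun i _ _ => by positivity))
      intro l _
      rcases Bool.eq_false_or_eq_true (σ l) with h | h <;>
        simp [hUf, hUg, h] <;> positivity
    have hsubV : Real.sqrt (∑ l ∈ univ.erase k, (Vf l - Vg l)^2) ≤ Real.sqrt S := by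
      apply Real.sqrt_le_sqrt
      refine le_trans (Finset.sum_le_sum ?_)
        (Finset.sum_le_sum_of_subset_of_nonneg (Finset.subset_univ _)
          (fun i _ _ => by positivity))
      intro l _
      rcases Bool.eq_false_or_eq_true (σ l) with h | h <;>
        simp [hVf, hVg, h] <;> positivity
    have habg : |g (x k) - g (x' k)| ≤ 1 := by
      have h1 := hg (x k); have h2 := hg (x' k)
      simp only [Set.mem_Icc] at h1 h2
      rw [abs_le]; constructor <;> [linarith; linarith]
    have hCk0 : 0 ≤ C k := hC0 k
    have hTUb : |(Φ (Function.update Uf k (f (x k))) - Φ (Function.update Uf k (f (x' k)))) -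
           (Φ (Function.update Ug k (g (x k))) - Φ (Function.update Ug k (g (x' k))))|
        ≤ L * |f (x k) - g (x k)| + L * |f (x' k) - g (x' k)|
          + Real.sqrt (C k) * Real.sqrt S := by
      refine (pair_bound hΦ hΦ2 k (hL k) (hC k) Uf Ug _ _ _ _).trans ?_
      refine add_le_add_right ?_ _
      calc Real.sqrt (C k) * Real.sqrt (∑ l ∈ univ.erase k, (Uf l - Ug l)^2) *
            |g (x k) - g (x' k)|
          ≤ Real.sqrt (C k) * Real.sqrt S * 1 := by
            apply mul_le_mul (mul_le_mul_of_nonneg_left hsubU (Real.sqrt_nonneg _)) habg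
              (abs_nonneg _) (by positivity)
        _ = Real.sqrt (C k) * Real.sqrt S := mul_one _
    have hTVb : |(Φ (Function.update Vf k (f (x k))) - Φ (Function.update Vf k (f (x' k)))) -
           (Φ (Function.update Vg k (g (x k))) - Φ (Function.update Vg k (g (x' k))))|
        ≤ L * |f (x k) - g (x k)| + L * |f (x' k) - g (x' k)|
          + Real.sqrt (C k) * Real.sqrt S := by
      refine (pair_bound hΦ hΦ2 k (hL k) (hC k) Vf Vg _ _ _ _).trans ?_
      refine add_le_add_right ?_ _
      calc Real.sqrt (C k) * Real.sqrt (∑ l ∈ univ.erase k, (Vf l - Vg l)^2) *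
            |g (x k) - g (x' k)|
          ≤ Real.sqrt (C k) * Real.sqrt S * 1 := by
            apply mul_le_mul (mul_le_mul_of_nonneg_left hsubV (Real.sqrt_nonneg _)) habg
              (abs_nonneg _) (by positivity)
        _ = Real.sqrt (C k) * Real.sqrt S := mul_one _
    rw [hA]
    have habs : |((Φ (Function.update Uf k (f (x k))) - Φ (Function.update Uf k (f (x' k)))) -
           (Φ (Function.update Ug k (g (x k))) - Φ (Function.update Ug k (g (x' k)))))
          + ((Φ (Function.update Vf k (f (x k))) - Φ (Function.update Vf k (f (x' k)))) -
             (Φ (Function.update Vg k (g (x k))) - Φ (Function.update Vg k (g (x' k)))))|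
        ≤ 2 * L * |f (x k) - g (x k)| + 2 * L * |f (x' k) - g (x' k)|
          + 2 * (Real.sqrt (C k) * Real.sqrt S) := by
      refine (abs_add_le _ _).trans ((add_le_add hTUb hTVb).trans ?_)
      ring_nf
      exact le_refl _
    have hsq := pow_le_pow_left₀ (abs_nonneg _) habs 2
    rw [sq_abs] at hsq
    refine hsq.trans ?_
    have hss : Real.sqrt (C k) ^ 2 = C k := Real.sq_sqrt hCk0
    have hss2 : Real.sqrt S ^ 2 = S := Real.sq_sqrt hS0
    have ha1 : |f (x k) - g (x k)| ^ 2 = (f (x k) - g (x k)) ^ 2 := sq_abs _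
    have hb1 : |f (x' k) - g (x' k)| ^ 2 = (f (x' k) - g (x' k)) ^ 2 := sq_abs _
    have hgen : ∀ a b c s : ℝ,
        (2*L*a + 2*L*b + 2*(c*s))^2 ≤ 16*L^2*(a^2+b^2) + 8*c^2*s^2 := by
      intro a b c s
      nlinarith [sq_nonneg (2*L*a + 2*L*b - 2*(c*s)),
        mul_nonneg (sq_nonneg L) (sq_nonneg (a - b))]
    have hfin := hgen |f (x k) - g (x k)| |f (x' k) - g (x' k)| (Real.sqrt (C k)) (Real.sqrt S)
    rw [ha1, hb1, hss, hss2] at hfin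
    linarith [hfin]
  refine le_trans (Finset.sum_le_sum fun k _ => key k) ?_
  have hsplit : ∑ k : Fin n,
      (16 * L ^ 2 * ((f (x k) - g (x k)) ^ 2 + (f (x' k) - g (x' k)) ^ 2) + 8 * C k * S)
      = 16 * L ^ 2 * S + 8 * (∑ k, C k) * S := by
    rw [Finset.sum_add_distrib]
    congr 1
    · rw [hSdef, Finset.mul_sum]
    · calc ∑ k : Fin n, 8 * C k * S = ∑ k : Fin n, C k * (8 * S) :=
          Finset.sum_congr rfl fun k _ => by ring
        _ = (∑ k, C k) * (8 * S) := by rw [← Finset.sum_mul]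
        _ = 8 * (∑ k, C k) * S := by ring
  rw [hsplit]
  have h1 : (∑ k, C k) * S ≤ M ^ 2 * S := mul_le_mul_of_nonneg_right hCsum hS0
  have h2 : 0 ≤ M ^ 2 * S := mul_nonneg (sq_nonneg M) hS0
  nlinarith [h1, h2]
end

section
/- Let X = (X_1, ..., X_n) be a vector of independent identically distributed random variables with values in a set 𝒳, and let ℱ be a finite class of functions f : 𝒳 → [0,1]. Then for every δ > 0, with probability at least 1 − δ in X it holds for all f ∈ ℱ that E[f(X_1)] ≤ (1/n) Σ_{i=1}^n f(X_i) + (2/n) E[R(ℱ(X))] + √( ln(1/δ) / (2n) ). -/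
open MeasureTheory ProbabilityTheory Finset

section RademacherHelpers
open Real Set

lemma integrable_of_bdd {α : Type*} [MeasurableSpace α] {ν : Measure α} [IsFiniteMeasure ν]
    {f : α → ℝ} (hf : Measurable f) {C : ℝ} (hC : ∀ x, |f x| ≤ C) : Integrable f ν :=
  Integrable.mono' (integrable_const C) hf.aestronglyMeasurable
    (Filter.Eventually.of_forall fun x => by simpa using hC x)

lemma abs_int_le_of_bdd' {α : Type*} [MeasurableSpace α] (μ : Measure α) [IsProbabilityMeasure μ]
    (f : α → ℝ) (hf : Measurable f) {K : ℝ} (hK : ∀ x, |f x| ≤ K) : |∫ x, f x ∂μ| ≤ K := by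
  calc |∫ x, f x ∂μ| ≤ ∫ x, |f x| ∂μ := by
        simpa [Real.norm_eq_abs] using norm_integral_le_integral_norm (μ := μ) f
    _ ≤ ∫ _x, K ∂μ := integral_mono (integrable_of_bdd hf hK).abs (integrable_const K) hK
    _ = K := by rw [integral_const]; simp

lemma nonempty_of_prob {α : Type*} [MeasurableSpace α] (μ : Measure α) [IsProbabilityMeasure μ] :
    Nonempty α := by
  by_contra hcon
  have h2 : (Set.univ : Set α) = ∅ := by ext x; exact absurd ⟨x⟩ hcon
  have h1 : μ Set.univ = 1 := measure_univ
  rw [h2] at h1; simp at h1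

lemma hoeff_core (p : ℝ) (hp0 : 0 ≤ p) (hp1 : p ≤ 1) (h : ℝ) :
    Real.log ((1 - p) + p * Real.exp h) ≤ p * h + h ^ 2 / 8 := by
  set q : ℝ → ℝ := fun x => (1 - p) + p * Real.exp x with hq_def
  have hqpos : ∀ x, 0 < q x := by
    intro x
    show 0 < 1 - p + p * Real.exp x
    rcases lt_or_eq_of_le hp1 with h1 | h1
    · exact add_pos_of_pos_of_nonneg (by linarith) (mul_nonneg hp0 (exp_pos x).le)
    · have h2 : p * Real.exp x > 0 := mul_pos (by linarith) (exp_pos x)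
      linarith
  have hq0 : q 0 = 1 := by simp [hq_def]
  have hqD : ∀ x, HasDerivAt q (p * Real.exp x) x := fun x =>
    ((Real.hasDerivAt_exp x).const_mul p).const_add (1 - p)
  set L : ℝ → ℝ := fun x => p * x + x ^ 2 / 8 - Real.log (q x) with hL_def
  set N : ℝ → ℝ := fun x => p + x / 4 - p * Real.exp x / q x with hN_def
  have hLD : ∀ x, HasDerivAt L (N x) x := by
    intro x
    have h1 : HasDerivAt (fun x : ℝ => p * x) p x := by
      simpa using (hasDerivAt_id x).const_mul p
    have h2 : HasDerivAt (fun x : ℝ => x ^ 2 / 8) (x / 4) x := by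
      have := (hasDerivAt_pow 2 x).div_const 8
      exact this.congr_deriv (by rw [show (2:ℕ) - 1 = 1 from rfl]; push_cast; ring)
    have h3 : HasDerivAt (fun x => Real.log (q x)) (p * Real.exp x / q x) x :=
      (hqD x).log (hqpos x).ne'
    exact (h1.add h2).sub h3
  have hND : ∀ x, HasDerivAt N (1 / 4 -
      (p * Real.exp x * q x - p * Real.exp x * (p * Real.exp x)) / (q x) ^ 2) x := by
    intro x
    have h2 : HasDerivAt (fun x : ℝ => x / 4) (1 / 4) x := by
      simpa using (hasDerivAt_id x).div_const 4
    have h3 : HasDerivAt (fun x => p * Real.exp x / q x)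
        ((p * Real.exp x * q x - p * Real.exp x * (p * Real.exp x)) / (q x) ^ 2) x := by
      have := ((Real.hasDerivAt_exp x).const_mul p).div (hqD x) (hqpos x).ne'
      exact this
    exact (((hasDerivAt_const x p).add h2).sub h3).congr_deriv (by ring)
  have hN_mono : Monotone N := by
    have hdiff : Differentiable ℝ N := fun x => (hND x).differentiableAt
    refine monotone_of_deriv_nonneg hdiff ?_
    intro x
    rw [(hND x).deriv]
    have hq2 : 0 < (q x) ^ 2 := pow_pos (hqpos x) 2
    have hA : (p * Real.exp x * q x - p * Real.exp x * (p * Real.exp x)) / (q x) ^ 2 ≤ 1 / 4 := by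
      rw [div_le_iff₀ hq2]
      have expand : p * Real.exp x * q x - p * Real.exp x * (p * Real.exp x)
          = (1 - p) * (p * Real.exp x) := by simp only [hq_def]; ring
      rw [expand]
      have : (q x) ^ 2 = ((1 - p) + p * Real.exp x) ^ 2 := by simp [hq_def]
      rw [this]
      nlinarith [sq_nonneg ((1 - p) - p * Real.exp x)]
    linarith
  have hN0 : N 0 = 0 := by simp [hN_def, hq0]
  have hL0 : L 0 = 0 := by simp [hL_def, hq0]
  have hLdiff : Differentiable ℝ L := fun x => (hLD x).differentiableAt
  have key : 0 ≤ L h := by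
    rcases le_or_gt 0 h with hh | hh
    · have hmono : MonotoneOn L (Ici (0:ℝ)) := by
        refine monotoneOn_of_deriv_nonneg (convex_Ici 0) hLdiff.continuous.continuousOn
          hLdiff.differentiableOn ?_
        intro x hx
        rw [interior_Ici] at hx
        rw [(hLD x).deriv]
        have := hN_mono (le_of_lt hx)
        rwa [hN0] at this
      have := hmono (self_mem_Ici) hh hh
      rwa [hL0] at this
    · have hanti : AntitoneOn L (Iic (0:ℝ)) := by
        refine antitoneOn_of_deriv_nonpos (convex_Iic 0) hLdiff.continuous.continuousOn
          hLdiff.differentiableOn ?_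
        intro x hx
        rw [interior_Iic] at hx
        rw [(hLD x).deriv]
        have := hN_mono (le_of_lt hx)
        rwa [hN0] at this
      have := hanti (Set.mem_Iic.mpr hh.le) (self_mem_Iic) hh.le
      rwa [hL0] at this
  have : Real.log (q h) ≤ p * h + h ^ 2 / 8 := by
    simp only [hL_def] at key; linarith
  simpa [hq_def] using this

lemma hoeffding_mgf {α : Type*} [MeasurableSpace α] (μ : Measure α) [IsProbabilityMeasure μ]
    (Y : α → ℝ) (hY : Measurable Y) (a b : ℝ) (hab : ∀ x, Y x ∈ Set.Icc a b)
    (h0 : ∫ x, Y x ∂μ = 0) (t : ℝ) :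
    ∫ x, Real.exp (t * Y x) ∂μ ≤ Real.exp (t ^ 2 * (b - a) ^ 2 / 8) := by
  have hne : Nonempty α := by
    by_contra hcon
    have h2 : (Set.univ : Set α) = ∅ := by ext x; exact absurd ⟨x⟩ hcon
    have h1 : μ Set.univ = 1 := measure_univ
    rw [h2] at h1; simp at h1
  obtain ⟨x₀⟩ := hne
  have hab' : a ≤ b := le_trans (hab x₀).1 (hab x₀).2
  have hYbd : ∀ x, |Y x| ≤ max |a| |b| := by
    intro x
    refine abs_le.mpr ⟨?_, ?_⟩
    · have h1 := (hab x).1; have h2 := neg_abs_le a; have h3 := le_max_left |a| |b|; linarith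
    · have h1 := (hab x).2; have h2 := le_abs_self b; have h3 := le_max_right |a| |b|; linarith
  have hYint : Integrable Y μ := integrable_of_bdd hY hYbd
  have ha0 : a ≤ 0 := by
    by_contra hcon
    push_neg at hcon
    have h2 : a ≤ ∫ x, Y x ∂μ := by
      have := integral_mono (integrable_const a) hYint (fun x => (hab x).1)
      simpa using this
    linarith
  have hb0 : 0 ≤ b := by
    by_contra hcon
    push_neg at hcon
    have h2 : (∫ x, Y x ∂μ) ≤ b := by
      have := integral_mono hYint (integrable_const b) (fun x => (hab x).2)
      simpa using this
    linarith
  rcases eq_or_lt_of_le hab' with heq | hlt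
  · have ha : a = 0 := le_antisymm ha0 (heq ▸ hb0)
    have hb : b = 0 := heq ▸ ha
    have hYzero : ∀ x, Y x = 0 := fun x =>
      le_antisymm (hb ▸ (hab x).2) (ha ▸ (hab x).1)
    simp only [hYzero, mul_zero, Real.exp_zero]
    rw [integral_const]
    simp only [probReal_univ, one_smul]
    exact Real.one_le_exp (by positivity)
  · have hba : 0 < b - a := by linarith
    set e1 := Real.exp (t * a) with he1
    set e2 := Real.exp (t * b) with he2
    set C1 := (b * e1 - a * e2) / (b - a) with hC1
    set C2 := (e2 - e1) / (b - a) with hC2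
    have hconv : ∀ x, Real.exp (t * Y x) ≤ C1 + C2 * Y x := by
      intro x
      have hy1 := (hab x).1
      have hy2 := (hab x).2
      set θ : ℝ := (b - Y x) / (b - a) with hθ
      set θ' : ℝ := (Y x - a) / (b - a) with hθ'
      have hθ0 : 0 ≤ θ := div_nonneg (by linarith) hba.le
      have hθ'0 : 0 ≤ θ' := div_nonneg (by linarith) hba.le
      have hsum : θ + θ' = 1 := by rw [hθ, hθ']; field_simp; ring
      have hcomb : θ * (t * a) + θ' * (t * b) = t * Y x := by
        rw [hθ, hθ']; field_simp; ring
      have hcx := convexOn_exp.2 (Set.mem_univ (t * a)) (Set.mem_univ (t * b)) hθ0 hθ'0 hsum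
      simp only [smul_eq_mul] at hcx
      rw [hcomb] at hcx
      calc Real.exp (t * Y x) ≤ θ * e1 + θ' * e2 := hcx
        _ = C1 + C2 * Y x := by rw [hθ, hθ', hC1, hC2]; field_simp; ring
    have hint_exp : Integrable (fun x => Real.exp (t * Y x)) μ := by
      refine integrable_of_bdd ((hY.const_mul t).exp) (C := Real.exp (|t| * max |a| |b|)) ?_
      intro x
      rw [abs_of_pos (exp_pos _)]
      apply Real.exp_le_exp.mpr
      calc t * Y x ≤ |t * Y x| := le_abs_self _
        _ = |t| * |Y x| := abs_mul t (Y x)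
        _ ≤ |t| * max |a| |b| := mul_le_mul_of_nonneg_left (hYbd x) (abs_nonneg t)
    have hint_rhs : Integrable (fun x => C1 + C2 * Y x) μ :=
      (integrable_const C1).add (hYint.const_mul C2)
    have step1 : ∫ x, Real.exp (t * Y x) ∂μ ≤ C1 := by
      calc ∫ x, Real.exp (t * Y x) ∂μ ≤ ∫ x, C1 + C2 * Y x ∂μ :=
            integral_mono hint_exp hint_rhs hconv
        _ = C1 := by
            rw [integral_add (integrable_const C1) (hYint.const_mul C2),
              MeasureTheory.integral_const_mul, h0, integral_const]
            simp
    -- now bound C1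
    set p : ℝ := -a / (b - a) with hp
    have hp0 : 0 ≤ p := div_nonneg (by linarith) hba.le
    have hp1 : p ≤ 1 := by
      rw [hp, div_le_one hba]; linarith
    set hh : ℝ := t * (b - a) with hhh
    set q : ℝ := (1 - p) + p * Real.exp hh with hqdef
    have hqpos : 0 < q := by
      rw [hqdef]
      rcases lt_or_eq_of_le hp1 with h1 | h1
      · exact add_pos_of_pos_of_nonneg (by linarith) (mul_nonneg hp0 (exp_pos hh).le)
      · have h2 : p * Real.exp hh > 0 := mul_pos (by linarith) (exp_pos hh)
        linarith
    have he1pos : (0:ℝ) < e1 := exp_pos _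
    have hfact : C1 = e1 * q := by
      have hexp : Real.exp hh = e2 / e1 := by
        rw [hhh, he1, he2, ← Real.exp_sub]
        congr 1; ring
      rw [hC1, hqdef, hexp, hp]
      field_simp
      ring
    have hlog := hoeff_core p hp0 hp1 hh
    have hC1le : C1 ≤ Real.exp (t ^ 2 * (b - a) ^ 2 / 8) := by
      rw [hfact, ← Real.exp_log hqpos, he1, ← Real.exp_add]
      apply Real.exp_le_exp.mpr
      have harg : t * a + p * hh = 0 := by
        rw [hp, hhh]; field_simp; ring
      have h2 : hh ^ 2 = t ^ 2 * (b - a) ^ 2 := by rw [hhh]; ring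
      have := hlog
      rw [← hqdef] at this
      nlinarith [this]
    exact le_trans step1 hC1le

lemma exp_mul_sub_bdd' {α : Type*} (f : α → ℝ) {K t E : ℝ} (hK : ∀ x, |f x| ≤ K) (hE : |E| ≤ K)
    (x : α) : |Real.exp (t * (f x - E))| ≤ Real.exp (|t| * (2 * K)) := by
  rw [abs_of_pos (Real.exp_pos _)]
  apply Real.exp_le_exp.mpr
  calc t * (f x - E) ≤ |t * (f x - E)| := le_abs_self _
    _ = |t| * |f x - E| := abs_mul _ _
    _ ≤ |t| * (2 * K) := by
      apply mul_le_mul_of_nonneg_left _ (abs_nonneg t)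
      calc |f x - E| ≤ |f x| + |E| := abs_sub _ _
        _ ≤ 2 * K := by have := hK x; linarith

lemma mcdiarmid_mgf {𝒳 : Type*} [MeasurableSpace 𝒳] (μ : Measure 𝒳) [IsProbabilityMeasure μ]
    (c K t : ℝ) (hc : 0 ≤ c) :
    ∀ (m : ℕ) (g : (Fin m → 𝒳) → ℝ), Measurable g → (∀ x, |g x| ≤ K) →
    (∀ (i : Fin m) (x x' : Fin m → 𝒳), (∀ j, j ≠ i → x j = x' j) → g x - g x' ≤ c) →
    ∫ x, Real.exp (t * (g x - ∫ y, g y ∂(Measure.pi fun _ => μ))) ∂(Measure.pi fun _ => μ)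
      ≤ Real.exp (m * (t ^ 2 * c ^ 2 / 8)) := by
  have hX : Nonempty 𝒳 := nonempty_of_prob μ
  intro m
  induction m with
  | zero =>
    intro g hg hK hdiff
    have hgconst : ∀ x : Fin 0 → 𝒳, g x = g (fun j => j.elim0) := by
      intro x; congr 1; funext j; exact j.elim0
    have h1 : ∫ y, g y ∂(Measure.pi fun _ : Fin 0 => μ) = g (fun j => j.elim0) := by
      simp_rw [hgconst]
      rw [integral_const]; simp
    have h2 : ∫ x, Real.exp (t * (g x - ∫ y, g y ∂(Measure.pi fun _ : Fin 0 => μ)))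
        ∂(Measure.pi fun _ : Fin 0 => μ) = ∫ _x, (1:ℝ) ∂(Measure.pi fun _ : Fin 0 => μ) := by
      apply integral_congr_ae
      apply Filter.EventuallyEq.of_eq
      funext x
      rw [hgconst x, h1]
      simp
    rw [h2, integral_const]
    simp
  | succ m IH =>
    intro g hg hK hdiff
    set Pm : Measure (Fin m → 𝒳) := Measure.pi fun _ => μ with hPm
    set Ps : Measure (Fin (m+1) → 𝒳) := Measure.pi fun _ => μ with hPs
    set e := MeasurableEquiv.piFinSuccAbove (fun _ : Fin (m+1) => 𝒳) 0 with he
    have mp : MeasurePreserving e Ps (μ.prod Pm) :=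
      measurePreserving_piFinSuccAbove (fun _ => μ) 0
    set G : 𝒳 × (Fin m → 𝒳) → ℝ := fun q => g (e.symm q) with hG
    have hGmeas : Measurable G := hg.comp e.symm.measurable
    have hGbd : ∀ q, |G q| ≤ K := fun q => hK _
    have hK0 : 0 ≤ K := le_trans (abs_nonneg _) (hK (fun _ => Classical.arbitrary 𝒳))
    have hGe : ∀ x, G (e x) = g x := fun x => by simp [hG]
    set h : (Fin m → 𝒳) → ℝ := fun y => ∫ x0, G (x0, y) ∂μ with hh
    have hhmeas : Measurable h :=
      (MeasureTheory.StronglyMeasurable.integral_prod_left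
        (f := fun x0 y => G (x0, y)) hGmeas.stronglyMeasurable).measurable
    have hGymeas : ∀ y, Measurable (fun x0 => G (x0, y)) := fun y =>
      hGmeas.comp measurable_prodMk_right
    have hGyint : ∀ y, Integrable (fun x0 => G (x0, y)) μ := fun y =>
      integrable_of_bdd (hGymeas y) (fun x0 => hGbd _)
    have hhbd : ∀ y, |h y| ≤ K :=
      fun y => abs_int_le_of_bdd' μ _ (hGymeas y) (fun x0 => hGbd _)
    set Eg : ℝ := ∫ x, g x ∂Ps with hEg
    have hEgbd : |Eg| ≤ K := abs_int_le_of_bdd' Ps g hg hK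
    have hGint : Integrable G (μ.prod Pm) := integrable_of_bdd hGmeas hGbd
    have hEgG : Eg = ∫ q, G q ∂(μ.prod Pm) := by
      rw [hEg, ← mp.integral_comp e.measurableEmbedding G]
      simp_rw [hGe]
    have hEgh : Eg = ∫ y, h y ∂Pm := by
      rw [hEgG, integral_prod_symm G hGint]
    -- step 0 : transfer to product space and Fubini
    have hexp_meas : Measurable (fun q => Real.exp (t * (G q - Eg))) :=
      ((hGmeas.sub measurable_const).const_mul t).exp
    have hexp_int : Integrable (fun q => Real.exp (t * (G q - Eg))) (μ.prod Pm) :=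
      integrable_of_bdd hexp_meas (exp_mul_sub_bdd' G hGbd hEgbd)
    have step0 : ∫ x, Real.exp (t * (g x - Eg)) ∂Ps
        = ∫ y, ∫ x0, Real.exp (t * (G (x0, y) - Eg)) ∂μ ∂Pm := by
      have e1 : ∫ x, Real.exp (t * (g x - Eg)) ∂Ps
          = ∫ x, Real.exp (t * (G (e x) - Eg)) ∂Ps := by
        apply integral_congr_ae
        apply Filter.EventuallyEq.of_eq
        funext x
        rw [hGe]
      rw [e1, mp.integral_comp e.measurableEmbedding (fun q => Real.exp (t * (G q - Eg)))]
      exact integral_prod_symm _ hexp_int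
    -- split inner integral
    have split : ∀ y, ∫ x0, Real.exp (t * (G (x0, y) - Eg)) ∂μ
        = (∫ x0, Real.exp (t * (G (x0, y) - h y)) ∂μ) * Real.exp (t * (h y - Eg)) := by
      intro y
      rw [← integral_mul_const]
      congr 1; funext x0
      rw [← Real.exp_add]
      congr 1; ring
    -- Hoeffding bound on inner integral
    have inner_le : ∀ y, ∫ x0, Real.exp (t * (G (x0, y) - h y)) ∂μ
        ≤ Real.exp (t ^ 2 * c ^ 2 / 8) := by
      intro y
      set Y : 𝒳 → ℝ := fun x0 => G (x0, y) - h y with hY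
      have hYmeas : Measurable Y := (hGymeas y).sub measurable_const
      have hY0 : ∫ x0, Y x0 ∂μ = 0 := by
        rw [hY]
        rw [integral_sub (hGyint y) (integrable_const _)]
        rw [integral_const]; simp [hh]
      have hbdd : BddBelow (Set.range Y) := by
        refine ⟨-(2 * K), ?_⟩
        rintro _ ⟨x0, rfl⟩
        have h1 := (abs_le.mp (hGbd (x0, y))).1
        have h2 := (abs_le.mp (hhbd y)).2
        show -(2 * K) ≤ G (x0, y) - h y
        linarith
      set a : ℝ := sInf (Set.range Y) with ha
      have hrange_ne : (Set.range Y).Nonempty := Set.range_nonempty Y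
      have hYa : ∀ x0, a ≤ Y x0 := fun x0 => csInf_le hbdd (Set.mem_range_self x0)
      have hdiffY : ∀ x0 x0', Y x0 - Y x0' ≤ c := by
        intro x0 x0'
        have key : g (e.symm (x0, y)) - g (e.symm (x0', y)) ≤ c := by
          apply hdiff 0
          intro j hj
          obtain ⟨k, rfl⟩ := Fin.exists_succAbove_eq hj
          rw [MeasurableEquiv.piFinSuccAbove_symm_apply]
          simp [Fin.insertNthEquiv, Fin.insertNth_apply_succAbove]
        rw [hY]; simp only [hG]
        linarith
      have hYb : ∀ x0, Y x0 ≤ a + c := by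
        intro x0
        have hlb : ∀ z ∈ Set.range Y, Y x0 - c ≤ z := by
          rintro _ ⟨x0', rfl⟩
          have := hdiffY x0 x0'; linarith
        have := le_csInf hrange_ne hlb
        rw [← ha] at this; linarith
      have := hoeffding_mgf μ Y hYmeas a (a + c) (fun x0 => ⟨hYa x0, hYb x0⟩) hY0 t
      simpa using this
    -- outer integral bound
    have houter_meas : Measurable (fun y => ∫ x0, Real.exp (t * (G (x0, y) - Eg)) ∂μ) :=
      (MeasureTheory.StronglyMeasurable.integral_prod_left
        (f := fun x0 y => Real.exp (t * (G (x0, y) - Eg)))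
        (hexp_meas.stronglyMeasurable)).measurable
    have houter_bd : ∀ y, |∫ x0, Real.exp (t * (G (x0, y) - Eg)) ∂μ|
        ≤ Real.exp (|t| * (2 * K)) := fun y =>
      abs_int_le_of_bdd' μ _ (hexp_meas.comp measurable_prodMk_right)
        (fun x0 => exp_mul_sub_bdd' G hGbd hEgbd (x0, y))
    have hh_exp_meas : Measurable (fun y => Real.exp (t * (h y - Eg))) :=
      ((hhmeas.sub measurable_const).const_mul t).exp
    have hh_exp_bd : ∀ y, |Real.exp (t * (h y - Eg))| ≤ Real.exp (|t| * (2 * K)) :=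
      exp_mul_sub_bdd' h hhbd hEgbd
    have step2 : ∫ y, ∫ x0, Real.exp (t * (G (x0, y) - Eg)) ∂μ ∂Pm
        ≤ Real.exp (t ^ 2 * c ^ 2 / 8) * ∫ y, Real.exp (t * (h y - Eg)) ∂Pm := by
      rw [← integral_const_mul]
      apply integral_mono (integrable_of_bdd houter_meas houter_bd)
      · exact integrable_of_bdd (hh_exp_meas.const_mul _)
          (C := Real.exp (t ^ 2 * c ^ 2 / 8) * Real.exp (|t| * (2 * K))) (fun y => by
            rw [abs_mul, abs_of_pos (Real.exp_pos _)]
            exact mul_le_mul_of_nonneg_left (hh_exp_bd y) (Real.exp_pos _).le)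
      · intro y
        show ∫ x0, Real.exp (t * (G (x0, y) - Eg)) ∂μ
          ≤ Real.exp (t ^ 2 * c ^ 2 / 8) * Real.exp (t * (h y - Eg))
        rw [split y]
        exact mul_le_mul_of_nonneg_right (inner_le y) (Real.exp_pos _).le
    -- apply IH to h
    have hhdiff : ∀ (i : Fin m) (y y' : Fin m → 𝒳), (∀ j, j ≠ i → y j = y' j)
        → h y - h y' ≤ c := by
      intro i y y' hyy'
      rw [hh]
      simp only
      rw [← integral_sub (hGyint y) (hGyint y')]
      calc ∫ x0, G (x0, y) - G (x0, y') ∂μ ≤ ∫ _x0, c ∂μ := by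
            apply integral_mono ((hGyint y).sub (hGyint y')) (integrable_const c)
            intro x0
            simp only [hG]
            apply hdiff (Fin.succAbove 0 i)
            intro j hj
            rw [MeasurableEquiv.piFinSuccAbove_symm_apply]
            rcases eq_or_ne j 0 with rfl | hj0
            · simp [Fin.insertNthEquiv]
            · obtain ⟨k, rfl⟩ := Fin.exists_succAbove_eq hj0
              simp only [Fin.insertNthEquiv, Equiv.coe_fn_mk, Fin.insertNth_apply_succAbove]
              exact hyy' k (fun hk => hj (by rw [hk]))
        _ = c := by rw [integral_const]; simp
    have hIH := IH h hhmeas hhbd hhdiff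
    
    rw [← hEgh] at hIH
    -- combine
    calc ∫ x, Real.exp (t * (g x - Eg)) ∂Ps
        = ∫ y, ∫ x0, Real.exp (t * (G (x0, y) - Eg)) ∂μ ∂Pm := step0
      _ ≤ Real.exp (t ^ 2 * c ^ 2 / 8) * ∫ y, Real.exp (t * (h y - Eg)) ∂Pm := step2
      _ ≤ Real.exp (t ^ 2 * c ^ 2 / 8) * Real.exp (m * (t ^ 2 * c ^ 2 / 8)) := by
          apply mul_le_mul_of_nonneg_left hIH (Real.exp_pos _).le
      _ = Real.exp ((m + 1 : ℕ) * (t ^ 2 * c ^ 2 / 8)) := by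
          rw [← Real.exp_add]; congr 1; push_cast; ring

lemma mcdiarmid_mgf' {𝒳 : Type*} [MeasurableSpace 𝒳] (μ : Measure 𝒳) [IsProbabilityMeasure μ]
    (c K t : ℝ) (hc : 0 ≤ c) (m : ℕ) (g : (Fin m → 𝒳) → ℝ) (hg : Measurable g)
    (hK : ∀ x, |g x| ≤ K)
    (hdiff : ∀ (i : Fin m) (x x' : Fin m → 𝒳), (∀ j, j ≠ i → x j = x' j) → g x - g x' ≤ c) :
    ∫ x, Real.exp (t * (g x - ∫ y, g y ∂(Measure.pi fun _ => μ))) ∂(Measure.pi fun _ => μ)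
      ≤ Real.exp (m * (t ^ 2 * c ^ 2 / 8)) :=
  mcdiarmid_mgf μ c K t hc m g hg hK hdiff

lemma measurePreserving_pi' {ι : Type*} [Fintype ι] {α β : ι → Type*}
    [∀ i, MeasurableSpace (α i)] [∀ i, MeasurableSpace (β i)]
    (μ : ∀ i, Measure (α i)) (ν : ∀ i, Measure (β i))
    [∀ i, IsProbabilityMeasure (μ i)] [∀ i, IsProbabilityMeasure (ν i)]
    (T : ∀ i, α i → β i) (hT : ∀ i, MeasurePreserving (T i) (μ i) (ν i)) :
    MeasurePreserving (fun z i => T i (z i)) (Measure.pi μ) (Measure.pi ν) := by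
  have hmeas : Measurable fun (z : ∀ i, α i) i => T i (z i) :=
    measurable_pi_lambda _ (fun i => (hT i).measurable.comp (measurable_pi_apply i))
  refine ⟨hmeas, ?_⟩
  refine (Measure.pi_eq fun s hs => ?_).symm
  rw [Measure.map_apply hmeas (MeasurableSet.univ_pi hs)]
  have hpre : (fun z i => T i (z i)) ⁻¹' (Set.univ.pi s) = Set.univ.pi (fun i => T i ⁻¹' s i) := by
    ext z; simp [Set.mem_pi]
  rw [hpre, Measure.pi_pi]
  exact Finset.prod_congr rfl fun i _ => by
    rw [← (hT i).map_eq, Measure.map_apply (hT i).measurable (hs i)]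

lemma measurePreserving_eval {ι : Type*} [Fintype ι] [DecidableEq ι] {α : Type*}
    [MeasurableSpace α] (μ : Measure α) [IsProbabilityMeasure μ] (i : ι) :
    MeasurePreserving (fun z : ι → α => z i) (Measure.pi fun _ => μ) μ := by
  refine ⟨measurable_pi_apply i, ?_⟩
  ext s hs
  rw [Measure.map_apply (measurable_pi_apply i) hs]
  have hpre : (fun z : ι → α => z i) ⁻¹' s
      = Set.univ.pi (Function.update (fun _ => Set.univ) i s) := Set.eval_preimage
  rw [hpre, Measure.pi_pi]
  rw [show (fun i_1 => μ (Function.update (fun _ => Set.univ) i s i_1))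
      = Function.update (fun _ => μ Set.univ) i (μ s) from funext fun j => by
    rcases eq_or_ne j i with rfl | hj
    · simp
    · rw [Function.update_of_ne hj, Function.update_of_ne hj]]
  rw [Finset.prod_update_of_mem (Finset.mem_univ i)]
  simp

lemma mcdiarmid_tail {𝒳 : Type*} [MeasurableSpace 𝒳] (μ : Measure 𝒳) [IsProbabilityMeasure μ]
    (c K : ℝ) (hc : 0 ≤ c) (m : ℕ) (g : (Fin m → 𝒳) → ℝ) (hg : Measurable g)
    (hK : ∀ x, |g x| ≤ K)
    (hdiff : ∀ (i : Fin m) (x x' : Fin m → 𝒳), (∀ j, j ≠ i → x j = x' j) → g x - g x' ≤ c)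
    (s l : ℝ) (hl : 0 ≤ l) :
    (Measure.pi fun _ : Fin m => μ) {x | (∫ y, g y ∂(Measure.pi fun _ : Fin m => μ)) + s ≤ g x}
      ≤ ENNReal.ofReal (Real.exp (-l * s + m * (l ^ 2 * c ^ 2 / 8))) := by
  set P : Measure (Fin m → 𝒳) := Measure.pi fun _ => μ with hP
  set Eg : ℝ := ∫ y, g y ∂P with hEg
  have hEgbd : |Eg| ≤ K := abs_int_le_of_bdd' P g hg hK
  set X : (Fin m → 𝒳) → ℝ := fun x => g x - Eg with hX
  have hXmeas : Measurable X := hg.sub measurable_const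
  have hint : Integrable (fun x => Real.exp (l * X x)) P :=
    integrable_of_bdd ((hXmeas.const_mul l).exp) (exp_mul_sub_bdd' g hK hEgbd)
  have hset : {x | Eg + s ≤ g x} = {x | s ≤ X x} := by
    ext x; simp only [Set.mem_setOf_eq, hX]; constructor <;> intro <;> linarith
  have hmgf : ProbabilityTheory.mgf X P l = ∫ x, Real.exp (l * X x) ∂P := rfl
  have htail := ProbabilityTheory.measure_ge_le_exp_mul_mgf (X := X) (μ := P) (t := l) s hl hint
  have hmgfle : ProbabilityTheory.mgf X P l ≤ Real.exp (m * (l ^ 2 * c ^ 2 / 8)) := by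
    rw [hmgf]
    exact mcdiarmid_mgf' μ c K l hc m g hg hK hdiff
  have h2 : (P {x | s ≤ X x}).toReal ≤ Real.exp (-l * s + m * (l ^ 2 * c ^ 2 / 8)) := by
    calc (P {x | s ≤ X x}).toReal ≤ Real.exp (-l * s) * ProbabilityTheory.mgf X P l := htail
      _ ≤ Real.exp (-l * s) * Real.exp (m * (l ^ 2 * c ^ 2 / 8)) :=
          mul_le_mul_of_nonneg_left hmgfle (Real.exp_pos _).le
      _ = Real.exp (-l * s + m * (l ^ 2 * c ^ 2 / 8)) := (Real.exp_add _ _).symm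
  rw [hset]
  rw [← ENNReal.ofReal_toReal (measure_ne_top P _)]
  exact ENNReal.ofReal_le_ofReal h2

lemma measurable_sup'_fun {α β : Type*} [MeasurableSpace α] (s : Finset β) (hne : s.Nonempty)
    (G : β → α → ℝ) (h : ∀ b ∈ s, Measurable (G b)) :
    Measurable fun x => s.sup' hne (fun b => G b x) := by
  have h1 := Finset.measurable_sup' hne h
  have h2 : (fun x => s.sup' hne (fun b => G b x)) = s.sup' hne G :=
    funext fun x => (Finset.sup'_apply hne G x).symm
  rw [h2]; exact h1

lemma abs_sup'_le {β : Type*} (s : Finset β) (hne : s.Nonempty) (G : β → ℝ) {C : ℝ}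
    (h : ∀ b ∈ s, |G b| ≤ C) : |s.sup' hne G| ≤ C := by
  obtain ⟨b0, hb0⟩ := hne
  refine abs_le.mpr ⟨?_, Finset.sup'_le _ _ (fun b hb => (abs_le.mp (h b hb)).2)⟩
  calc -C ≤ G b0 := (abs_le.mp (h b0 hb0)).1
    _ ≤ s.sup' ⟨b0, hb0⟩ G := Finset.le_sup' G hb0

theorem symmetrization {𝒳 : Type*} [MeasurableSpace 𝒳] (μ : Measure 𝒳) [IsProbabilityMeasure μ]
    (n : ℕ) (hn : 0 < n) (F : Finset (𝒳 → ℝ)) (hFne : F.Nonempty)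
    (hFmeas : ∀ f ∈ F, Measurable f) (hFrange : ∀ f ∈ F, ∀ x : 𝒳, f x ∈ Set.Icc (0 : ℝ) 1) :
    ∫ x, F.sup' hFne (fun f => (∫ z, f z ∂μ) - (n:ℝ)⁻¹ * ∑ i, f (x i))
      ∂(Measure.pi fun _ : Fin n => μ)
    ≤ (2 / n) * ∫ x, (2 ^ n : ℝ)⁻¹ * ∑ ε : Fin n → Bool,
        F.sup' hFne (fun f => ∑ i, (if ε i then (1:ℝ) else -1) * f (x i))
      ∂(Measure.pi fun _ : Fin n => μ) := by
  have hn' : (0:ℝ) < n := Nat.cast_pos.mpr hn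
  set ν : Measure (Fin n → 𝒳) := Measure.pi fun _ => μ with hν
  set πW : Measure (Fin n → 𝒳 × 𝒳) := Measure.pi fun _ => μ.prod μ with hπW
  -- basic bounds
  have hfbd : ∀ f ∈ F, ∀ z, |f z| ≤ 1 := fun f hf z =>
    abs_le.mpr ⟨by linarith [(hFrange f hf z).1], (hFrange f hf z).2⟩
  have hIfbd : ∀ f ∈ F, |∫ z, f z ∂μ| ≤ 1 := fun f hf =>
    abs_int_le_of_bdd' μ f (hFmeas f hf) (hfbd f hf)
  set A : (𝒳 → ℝ) → (Fin n → 𝒳) → ℝ := fun f x => (n:ℝ)⁻¹ * ∑ i, f (x i) with hA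
  have hAmeas : ∀ f ∈ F, Measurable (A f) := fun f hf =>
    (Finset.measurable_sum Finset.univ fun i _ =>
      (hFmeas f hf).comp (measurable_pi_apply i)).const_mul _
  have hAbd : ∀ f ∈ F, ∀ x, |A f x| ≤ 1 := by
    intro f hf x
    rw [hA]
    have h1 : (0:ℝ) ≤ ∑ i, f (x i) := Finset.sum_nonneg fun i _ => (hFrange f hf (x i)).1
    have h2 : ∑ i, f (x i) ≤ (n:ℝ) := by
      calc ∑ i, f (x i) ≤ ∑ _i : Fin n, (1:ℝ) :=
            Finset.sum_le_sum fun i _ => (hFrange f hf (x i)).2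
        _ = n := by simp
    rw [abs_of_nonneg (by positivity)]
    rw [inv_mul_le_iff₀ hn']
    linarith
  set g : (Fin n → 𝒳) → ℝ := fun x => F.sup' hFne (fun f => (∫ z, f z ∂μ) - A f x) with hg
  have hgmeas : Measurable g :=
    measurable_sup'_fun F hFne _ (fun f hf => measurable_const.sub (hAmeas f hf))
  have hgbd : ∀ x, |g x| ≤ 2 := fun x => abs_sup'_le F hFne _ (fun f hf => by
    have := hIfbd f hf; have := hAbd f hf x
    calc |(∫ z, f z ∂μ) - A f x| ≤ |∫ z, f z ∂μ| + |A f x| := abs_sub _ _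
      _ ≤ 2 := by linarith)
  set S : (Fin n → 𝒳) × (Fin n → 𝒳) → ℝ := fun q => F.sup' hFne (fun f => A f q.2 - A f q.1)
    with hS
  have hSmeas : Measurable S :=
    measurable_sup'_fun F hFne _ (fun f hf =>
      ((hAmeas f hf).comp measurable_snd).sub ((hAmeas f hf).comp measurable_fst))
  have hSbd : ∀ q, |S q| ≤ 2 := fun q => abs_sup'_le F hFne _ (fun f hf => by
    have := hAbd f hf q.1; have := hAbd f hf q.2
    calc |A f q.2 - A f q.1| ≤ |A f q.2| + |A f q.1| := abs_sub _ _
      _ ≤ 2 := by linarith)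
  set Rad : (Fin n → Bool) → (Fin n → 𝒳) → ℝ := fun ε x =>
    F.sup' hFne (fun f => ∑ i, (if ε i then (1:ℝ) else -1) * f (x i)) with hRad
  have hRadmeas : ∀ ε, Measurable (Rad ε) := fun ε =>
    measurable_sup'_fun F hFne _ (fun f hf =>
      Finset.measurable_sum Finset.univ fun i _ =>
        ((hFmeas f hf).comp (measurable_pi_apply i)).const_mul _)
  have hRadbd : ∀ ε x, |Rad ε x| ≤ n := fun ε x => abs_sup'_le F hFne _ (fun f hf => by
    calc |∑ i, (if ε i then (1:ℝ) else -1) * f (x i)|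
        ≤ ∑ i, |(if ε i then (1:ℝ) else -1) * f (x i)| := Finset.abs_sum_le_sum_abs _ _
      _ ≤ ∑ _i : Fin n, (1:ℝ) := Finset.sum_le_sum fun i _ => by
          rw [abs_mul]
          rcases Bool.eq_false_or_eq_true (ε i) with h | h <;>
            simp [h, hfbd f hf (x i)]
      _ = n := by simp)
  set R' : (Fin n → 𝒳) → ℝ := fun x => (2 ^ n : ℝ)⁻¹ * ∑ ε : Fin n → Bool, Rad ε x with hR'
  have h2npos : (0:ℝ) < 2 ^ n := by positivity
  have hR'meas : Measurable R' :=
    (Finset.measurable_sum Finset.univ fun ε _ => hRadmeas ε).const_mul _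
  have hR'bd : ∀ x, |R' x| ≤ n := by
    intro x
    rw [hR', abs_mul, abs_of_pos (inv_pos.mpr h2npos)]
    calc (2 ^ n : ℝ)⁻¹ * |∑ ε : Fin n → Bool, Rad ε x|
        ≤ (2 ^ n : ℝ)⁻¹ * ∑ ε : Fin n → Bool, (n:ℝ) := by
          apply mul_le_mul_of_nonneg_left _ (inv_pos.mpr h2npos).le
          calc |∑ ε : Fin n → Bool, Rad ε x| ≤ ∑ ε : Fin n → Bool, |Rad ε x| :=
                Finset.abs_sum_le_sum_abs _ _
            _ ≤ ∑ _ε : Fin n → Bool, (n:ℝ) := Finset.sum_le_sum fun ε _ => hRadbd ε x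
      _ = (n:ℝ) := by
          rw [Finset.sum_const]
          simp only [Finset.card_univ, Fintype.card_fun, Fintype.card_bool, Fintype.card_fin,
            nsmul_eq_mul, Nat.cast_pow, Nat.cast_ofNat]
          field_simp
  -- Step A : marginals
  have stepA : ∀ f ∈ F, ∫ z, f z ∂μ = ∫ y, A f y ∂ν := by
    intro f hf
    have heval : ∀ i : Fin n, ∫ y, f (y i) ∂ν = ∫ z, f z ∂μ := by
      intro i
      have mp := measurePreserving_eval (ι := Fin n) μ i
      conv_rhs => rw [← mp.map_eq]
      exact (integral_map mp.measurable.aemeasurable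
        (by rw [mp.map_eq]; exact (hFmeas f hf).aestronglyMeasurable)).symm
    have hsum : ∫ y, ∑ i, f (y i) ∂ν = ∑ i : Fin n, ∫ y, f (y i) ∂ν := by
      apply integral_finset_sum
      intro i _
      exact integrable_of_bdd ((hFmeas f hf).comp (measurable_pi_apply i))
        (fun y => hfbd f hf (y i))
    rw [hA]
    simp only
    rw [integral_const_mul, hsum]
    simp_rw [heval]
    rw [Finset.sum_const]
    simp only [Finset.card_univ, Fintype.card_fin, nsmul_eq_mul]
    rw [← mul_assoc, inv_mul_cancel₀ (ne_of_gt hn'), one_mul]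
  -- Step B : pointwise ghost sample bound
  have hSx_meas : ∀ x, Measurable (fun y => S (x, y)) := fun x =>
    hSmeas.comp measurable_prodMk_left
  have stepB : ∀ x, g x ≤ ∫ y, S (x, y) ∂ν := by
    intro x
    apply Finset.sup'_le
    intro f hf
    have h1 : (∫ z, f z ∂μ) - A f x = ∫ y, A f y - A f x ∂ν := by
      rw [integral_sub (integrable_of_bdd (hAmeas f hf) (hAbd f hf)) (integrable_const _),
        integral_const]
      simp [stepA f hf]
    rw [h1]
    apply integral_mono
    · exact (integrable_of_bdd (hAmeas f hf) (hAbd f hf)).sub (integrable_const _)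
    · exact integrable_of_bdd (hSx_meas x) (fun y => hSbd (x, y))
    · intro y
      exact Finset.le_sup' (fun f => A f (x, y).2 - A f (x, y).1) hf
  -- Step C/D/E : to product space
  have hSint : Integrable S (ν.prod ν) := integrable_of_bdd hSmeas hSbd
  have houter_meas : Measurable fun x => ∫ y, S (x, y) ∂ν := by
    have := MeasureTheory.StronglyMeasurable.integral_prod_left (μ := ν)
      (f := fun y x => S (x, y)) ((hSmeas.comp measurable_swap).stronglyMeasurable)
    exact this.measurable
  have stepC : ∫ x, g x ∂ν ≤ ∫ x, ∫ y, S (x, y) ∂ν ∂ν := by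
    apply integral_mono (integrable_of_bdd hgmeas hgbd)
    · exact integrable_of_bdd houter_meas
        (fun x => abs_int_le_of_bdd' ν _ (hSx_meas x) (fun y => hSbd (x, y)))
    · exact stepB
  have stepD : ∫ x, ∫ y, S (x, y) ∂ν ∂ν = ∫ q, S q ∂(ν.prod ν) :=
    (integral_prod S hSint).symm
  set ep := MeasurableEquiv.arrowProdEquivProdArrow 𝒳 𝒳 (Fin n) with hep
  have mpW : MeasurePreserving ep πW (ν.prod ν) :=
    measurePreserving_arrowProdEquivProdArrow 𝒳 𝒳 (Fin n) (fun _ => μ) (fun _ => μ)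
  have stepE : ∫ q, S q ∂(ν.prod ν) = ∫ w, S (ep w) ∂πW :=
    (mpW.integral_comp ep.measurableEmbedding S).symm
  -- flip maps
  set flip : (Fin n → Bool) → (Fin n → 𝒳 × 𝒳) → (Fin n → 𝒳 × 𝒳) :=
    fun ε w i => if ε i then w i else Prod.swap (w i) with hflip
  have mpflip : ∀ ε, MeasurePreserving (flip ε) πW πW := by
    intro ε
    have base := measurePreserving_pi' (fun _ : Fin n => μ.prod μ) (fun _ => μ.prod μ)
      (fun i => if ε i then id else Prod.swap)
      (fun i => by
        by_cases h : ε i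
        · simp only [h, if_true]; exact MeasurePreserving.id _
        · simp only [h, if_false]; exact Measure.measurePreserving_swap)
    have hfun : (fun (z : Fin n → 𝒳 × 𝒳) i => (if ε i then id else Prod.swap) (z i))
        = flip ε := by
      funext z i
      by_cases h : ε i <;> simp [h, hflip]
    rw [hfun] at base
    exact base
  have hSep_meas : Measurable fun w => S (ep w) := hSmeas.comp ep.measurable
  have stepF : ∀ ε, ∫ w, S (ep w) ∂πW = ∫ w, S (ep (flip ε w)) ∂πW := by
    intro ε
    calc ∫ w, S (ep w) ∂πW = ∫ w, S (ep w) ∂(πW.map (flip ε)) := by rw [(mpflip ε).map_eq]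
      _ = ∫ w, S (ep (flip ε w)) ∂πW := integral_map (mpflip ε).measurable.aemeasurable
          (by rw [(mpflip ε).map_eq]; exact hSep_meas.aestronglyMeasurable)
  have hT_meas : ∀ ε, Measurable fun w => S (ep (flip ε w)) := fun ε =>
    hSep_meas.comp (mpflip ε).measurable
  have hT_int : ∀ ε, Integrable (fun w => S (ep (flip ε w))) πW := fun ε =>
    integrable_of_bdd (hT_meas ε) (fun w => hSbd _)
  have stepG : ∫ w, S (ep w) ∂πW
      = ∫ w, (2 ^ n : ℝ)⁻¹ * ∑ ε : Fin n → Bool, S (ep (flip ε w)) ∂πW := by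
    rw [integral_const_mul, integral_finset_sum _ (fun ε _ => hT_int ε)]
    have hsum : ∑ ε : Fin n → Bool, ∫ w, S (ep (flip ε w)) ∂πW
        = (2 ^ n : ℝ) * ∫ w, S (ep w) ∂πW := by
      rw [Finset.sum_congr rfl (fun ε _ => (stepF ε).symm), Finset.sum_const]
      simp only [Finset.card_univ, Fintype.card_fun, Fintype.card_bool, Fintype.card_fin,
        nsmul_eq_mul, Nat.cast_pow, Nat.cast_ofNat]
    rw [hsum, ← mul_assoc, inv_mul_cancel₀ (ne_of_gt h2npos), one_mul]
  -- pointwise Rademacher bound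
  set RadNeg : (Fin n → Bool) → (Fin n → 𝒳) → ℝ := fun ε x =>
    F.sup' hFne (fun f => ∑ i, (if ε i then (-1:ℝ) else 1) * f (x i)) with hRadNeg
  have hSflip : ∀ ε w, S (ep (flip ε w))
      ≤ (n:ℝ)⁻¹ * (Rad ε (fun i => (w i).2) + RadNeg ε (fun i => (w i).1)) := by
    intro ε w
    apply Finset.sup'_le
    intro f hf
    have hdiffsum : A f (ep (flip ε w)).2 - A f (ep (flip ε w)).1
        = (n:ℝ)⁻¹ * ((∑ i, (if ε i then (1:ℝ) else -1) * f ((w i).2))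
          + ∑ i, (if ε i then (-1:ℝ) else 1) * f ((w i).1)) := by
      rw [hA]
      simp only
      rw [← mul_sub, ← Finset.sum_sub_distrib, ← Finset.sum_add_distrib]
      congr 1
      apply Finset.sum_congr rfl
      intro i _
      by_cases h : ε i <;> simp [h, hflip, hep, MeasurableEquiv.arrowProdEquivProdArrow,
        Equiv.arrowProdEquivProdArrow] <;> ring
    rw [hdiffsum]
    apply mul_le_mul_of_nonneg_left _ (inv_pos.mpr hn').le
    apply add_le_add
    · exact Finset.le_sup' (fun f => ∑ i, (if ε i then (1:ℝ) else -1) * f ((w i).2)) hf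
    · exact Finset.le_sup' (fun f => ∑ i, (if ε i then (-1:ℝ) else 1) * f ((w i).1)) hf
  have hRadNegsum : ∀ x, ∑ ε : Fin n → Bool, RadNeg ε x = ∑ ε : Fin n → Bool, Rad ε x := by
    intro x
    refine Fintype.sum_equiv ⟨fun ε i => !(ε i), fun ε i => !(ε i),
      fun ε => by funext i; simp, fun ε => by funext i; simp⟩
      (fun ε => RadNeg ε x) (fun ε => Rad ε x) (fun ε => ?_)
    apply Finset.sup'_congr hFne rfl
    intro f _
    apply Finset.sum_congr rfl
    intro i _
    simp only [Equiv.coe_fn_mk]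
    by_cases h : ε i <;> simp [h]
  have stepH : ∀ w, (2 ^ n : ℝ)⁻¹ * ∑ ε : Fin n → Bool, S (ep (flip ε w))
      ≤ (n:ℝ)⁻¹ * (R' (fun i => (w i).2) + R' (fun i => (w i).1)) := by
    intro w
    calc (2 ^ n : ℝ)⁻¹ * ∑ ε : Fin n → Bool, S (ep (flip ε w))
        ≤ (2 ^ n : ℝ)⁻¹ * ∑ ε : Fin n → Bool,
            (n:ℝ)⁻¹ * (Rad ε (fun i => (w i).2) + RadNeg ε (fun i => (w i).1)) :=
          mul_le_mul_of_nonneg_left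
            (Finset.sum_le_sum fun ε _ => hSflip ε w) (inv_pos.mpr h2npos).le
      _ = (n:ℝ)⁻¹ * (R' (fun i => (w i).2) + R' (fun i => (w i).1)) := by
          rw [hR']
          simp only
          rw [← Finset.mul_sum, Finset.sum_add_distrib, hRadNegsum]
          ring
  -- integrate the bound
  have hR'b_meas : Measurable fun w : Fin n → 𝒳 × 𝒳 => R' (fun i => (w i).2) :=
    hR'meas.comp (measurable_pi_lambda _ fun i => measurable_snd.comp (measurable_pi_apply i))
  have hR'a_meas : Measurable fun w : Fin n → 𝒳 × 𝒳 => R' (fun i => (w i).1) :=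
    hR'meas.comp (measurable_pi_lambda _ fun i => measurable_fst.comp (measurable_pi_apply i))
  have stepI : ∫ w, (2 ^ n : ℝ)⁻¹ * ∑ ε : Fin n → Bool, S (ep (flip ε w)) ∂πW
      ≤ ∫ w, (n:ℝ)⁻¹ * (R' (fun i => (w i).2) + R' (fun i => (w i).1)) ∂πW := by
    apply integral_mono
    · refine integrable_of_bdd (C := 2) ?_ ?_
      · exact ((Finset.measurable_sum Finset.univ fun ε _ => hT_meas ε).const_mul _)
      · intro w
        rw [abs_mul, abs_of_pos (inv_pos.mpr h2npos)]
        calc (2 ^ n:ℝ)⁻¹ * |∑ ε : Fin n → Bool, S (ep (flip ε w))|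
            ≤ (2 ^ n:ℝ)⁻¹ * ∑ ε : Fin n → Bool, (2:ℝ) := by
              apply mul_le_mul_of_nonneg_left _ (inv_pos.mpr h2npos).le
              calc |∑ ε : Fin n → Bool, S (ep (flip ε w))|
                  ≤ ∑ ε : Fin n → Bool, |S (ep (flip ε w))| := Finset.abs_sum_le_sum_abs _ _
                _ ≤ ∑ _ε : Fin n → Bool, (2:ℝ) := Finset.sum_le_sum fun ε _ => hSbd _
          _ = 2 := by
              rw [Finset.sum_const]
              simp only [Finset.card_univ, Fintype.card_fun, Fintype.card_bool, Fintype.card_fin,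
                nsmul_eq_mul, Nat.cast_pow, Nat.cast_ofNat]
              field_simp
    · refine integrable_of_bdd (C := (n:ℝ)⁻¹ * (2 * n)) ?_ ?_
      · exact ((hR'b_meas.add hR'a_meas).const_mul _)
      · intro w
        rw [abs_mul, abs_of_pos (inv_pos.mpr hn')]
        apply mul_le_mul_of_nonneg_left _ (inv_pos.mpr hn').le
        calc |R' (fun i => (w i).2) + R' (fun i => (w i).1)|
            ≤ |R' (fun i => (w i).2)| + |R' (fun i => (w i).1)| := abs_add_le _ _
          _ ≤ 2 * n := by
              have := hR'bd (fun i => (w i).2); have := hR'bd (fun i => (w i).1); linarith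
    · exact stepH
  -- identify marginals
  have mpa : MeasurePreserving (fun (w : Fin n → 𝒳 × 𝒳) i => (w i).1) πW ν :=
    measurePreserving_pi' (fun _ => μ.prod μ) (fun _ => μ) (fun _ => Prod.fst)
      (fun i => ⟨measurable_fst, by rw [Measure.map_fst_prod]; simp⟩)
  have mpb : MeasurePreserving (fun (w : Fin n → 𝒳 × 𝒳) i => (w i).2) πW ν :=
    measurePreserving_pi' (fun _ => μ.prod μ) (fun _ => μ) (fun _ => Prod.snd)
      (fun i => ⟨measurable_snd, by rw [Measure.map_snd_prod]; simp⟩)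
  have hinta : ∫ w, R' (fun i => (w i).1) ∂πW = ∫ x, R' x ∂ν := by
    conv_rhs => rw [← mpa.map_eq]
    exact (integral_map mpa.measurable.aemeasurable
      (by rw [mpa.map_eq]; exact hR'meas.aestronglyMeasurable)).symm
  have hintb : ∫ w, R' (fun i => (w i).2) ∂πW = ∫ x, R' x ∂ν := by
    conv_rhs => rw [← mpb.map_eq]
    exact (integral_map mpb.measurable.aemeasurable
      (by rw [mpb.map_eq]; exact hR'meas.aestronglyMeasurable)).symm
  have stepJ : ∫ w, (n:ℝ)⁻¹ * (R' (fun i => (w i).2) + R' (fun i => (w i).1)) ∂πW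
      = (2 / n) * ∫ x, R' x ∂ν := by
    rw [integral_const_mul,
      integral_add (integrable_of_bdd hR'b_meas (fun w => hR'bd _))
        (integrable_of_bdd hR'a_meas (fun w => hR'bd _)),
      hinta, hintb]
    field_simp
    ring
  -- final chain
  show ∫ x, g x ∂ν ≤ (2 / n) * ∫ x, R' x ∂ν
  calc ∫ x, g x ∂ν ≤ ∫ x, ∫ y, S (x, y) ∂ν ∂ν := stepC
    _ = ∫ q, S q ∂(ν.prod ν) := stepD
    _ = ∫ w, S (ep w) ∂πW := stepE
    _ = ∫ w, (2 ^ n : ℝ)⁻¹ * ∑ ε : Fin n → Bool, S (ep (flip ε w)) ∂πW := stepG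
    _ ≤ ∫ w, (n:ℝ)⁻¹ * (R' (fun i => (w i).2) + R' (fun i => (w i).1)) ∂πW := stepI
    _ = (2 / n) * ∫ x, R' x ∂ν := stepJ

end RademacherHelpers

/-- Let `X = (X_1,…,X_n)` be i.i.d. `𝒳`-valued random variables and `F` a
finite class of measurable functions `f : 𝒳 → [0,1]`. Then for every `δ > 0`, with
probability at least `1 - δ` in `X`, every `f ∈ F` satisfies
`E[f(X_1)] ≤ (1/n) ∑_i f(X_i) + (2/n) E[R(F(X))] + √(ln(1/δ)/(2n))`, where the Rademacher
average is `R(F(x)) = E_ε sup_{f ∈ F} ∑_i ε_i f(x_i)` with `ε` uniform on `{-1,1}ⁿ`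
(realized as the average over `ε : Fin n → Bool` of `∑_i (±1) f(x_i)`). -/
theorem statement17
    (𝒳 Ω : Type) [MeasurableSpace 𝒳] [MeasurableSpace Ω]
    (P : Measure Ω) [IsProbabilityMeasure P]
    (n : ℕ) (hn : 0 < n) (X : Fin n → Ω → 𝒳)
    (F : Finset (𝒳 → ℝ)) (hFne : F.Nonempty)
    (hXmeas : ∀ i, Measurable (X i))
    (hXindep : iIndepFun X P)
    (hXident : ∀ i, Measure.map (X i) P = Measure.map (X ⟨0, hn⟩) P)
    (hFmeas : ∀ f ∈ F, Measurable f)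
    (hFrange : ∀ f ∈ F, ∀ x : 𝒳, f x ∈ Set.Icc (0 : ℝ) 1)
    (δ : ℝ) (hδ : 0 < δ) :
    ENNReal.ofReal (1 - δ) ≤
      P {ω | ∀ f ∈ F,
        (∫ ω', f (X ⟨0, hn⟩ ω') ∂P) ≤
          (n : ℝ)⁻¹ * ∑ i, f (X i ω)
          + (2 / n) * (∫ ω'', (2 ^ n : ℝ)⁻¹ * ∑ ε : Fin n → Bool,
              F.sup' hFne (fun f => ∑ i, (if ε i then (1 : ℝ) else -1) * f (X i ω'')) ∂P)
          + Real.sqrt (Real.log (1 / δ) / (2 * n))} := by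
  classical
  rcases le_or_gt 1 δ with hδ1 | hδ1
  · rw [ENNReal.ofReal_of_nonpos (by linarith)]
    exact zero_le
  have hn' : (0:ℝ) < n := Nat.cast_pos.mpr hn
  set μ : Measure 𝒳 := P.map (X ⟨0, hn⟩) with hμ
  haveI : IsProbabilityMeasure μ := Measure.isProbabilityMeasure_map (hXmeas _).aemeasurable
  set ν : Measure (Fin n → 𝒳) := Measure.pi fun _ => μ with hν
  set T : Ω → Fin n → 𝒳 := fun ω i => X i ω with hT
  have hTmeas : Measurable T := measurable_pi_lambda _ hXmeas
  have hTmap : P.map T = ν := by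
    rw [hν]
    refine (Measure.pi_eq fun s hs => ?_).symm
    rw [Measure.map_apply hTmeas (MeasurableSet.univ_pi hs)]
    have hpre : T ⁻¹' (Set.univ.pi s) = ⋂ i ∈ Finset.univ, X i ⁻¹' s i := by
      ext ω; simp [Set.mem_pi, hT]
    rw [hpre, hXindep.measure_inter_preimage_eq_mul Finset.univ (fun i _ => hs i)]
    refine Finset.prod_congr rfl fun i _ => ?_
    rw [← Measure.map_apply (hXmeas i) (hs i), hXident i]
  -- Rademacher average function
  set R' : (Fin n → 𝒳) → ℝ := fun x => (2 ^ n : ℝ)⁻¹ * ∑ ε : Fin n → Bool,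
    F.sup' hFne (fun f => ∑ i, (if ε i then (1:ℝ) else -1) * f (x i)) with hR'
  have hR'meas : Measurable R' :=
    (Finset.measurable_sum Finset.univ fun ε _ => measurable_sup'_fun F hFne _
      (fun f hf => Finset.measurable_sum Finset.univ fun i _ =>
        ((hFmeas f hf).comp (measurable_pi_apply i)).const_mul _)).const_mul _
  set ER : ℝ := ∫ x, R' x ∂ν with hER
  set tval : ℝ := Real.sqrt (Real.log (1 / δ) / (2 * n)) with htval
  have htval0 : 0 ≤ tval := Real.sqrt_nonneg _
  -- the empirical process
  set g : (Fin n → 𝒳) → ℝ := fun x =>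
    F.sup' hFne (fun f => (∫ z, f z ∂μ) - (n:ℝ)⁻¹ * ∑ i, f (x i)) with hg
  have hfbd : ∀ f ∈ F, ∀ z : 𝒳, |f z| ≤ 1 := fun f hf z =>
    abs_le.mpr ⟨by linarith [(hFrange f hf z).1], (hFrange f hf z).2⟩
  have hIfbd : ∀ f ∈ F, |∫ z, f z ∂μ| ≤ 1 := fun f hf =>
    abs_int_le_of_bdd' μ f (hFmeas f hf) (hfbd f hf)
  have hAbd : ∀ f ∈ F, ∀ x : Fin n → 𝒳, |(n:ℝ)⁻¹ * ∑ i, f (x i)| ≤ 1 := by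
    intro f hf x
    have h1 : (0:ℝ) ≤ ∑ i, f (x i) := Finset.sum_nonneg fun i _ => (hFrange f hf (x i)).1
    have h2 : ∑ i, f (x i) ≤ (n:ℝ) := by
      calc ∑ i, f (x i) ≤ ∑ _i : Fin n, (1:ℝ) :=
            Finset.sum_le_sum fun i _ => (hFrange f hf (x i)).2
        _ = n := by simp
    rw [abs_of_nonneg (by positivity), inv_mul_le_iff₀ hn']
    linarith
  have hgmeas : Measurable g := measurable_sup'_fun F hFne _ (fun f hf =>
    measurable_const.sub ((Finset.measurable_sum Finset.univ fun i _ =>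
      (hFmeas f hf).comp (measurable_pi_apply i)).const_mul _))
  have hgbd : ∀ x, |g x| ≤ 2 := fun x => abs_sup'_le F hFne _ (fun f hf => by
    have h1 := hIfbd f hf; have h2 := hAbd f hf x
    calc |(∫ z, f z ∂μ) - (n:ℝ)⁻¹ * ∑ i, f (x i)|
        ≤ |∫ z, f z ∂μ| + |(n:ℝ)⁻¹ * ∑ i, f (x i)| := abs_sub _ _
      _ ≤ 2 := by linarith)
  have hgdiff : ∀ (i : Fin n) (x x' : Fin n → 𝒳), (∀ j, j ≠ i → x j = x' j)
      → g x - g x' ≤ (n:ℝ)⁻¹ := by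
    intro i x x' hagree
    have key : g x ≤ g x' + (n:ℝ)⁻¹ := by
      apply Finset.sup'_le
      intro f hf
      have hsum : ∑ j, f (x' j) - ∑ j, f (x j) = f (x' i) - f (x i) := by
        rw [← Finset.sum_sub_distrib,
          Finset.sum_eq_single_of_mem i (Finset.mem_univ i)
            (fun j _ hj => by rw [hagree j hj]; ring)]
      have hA : (n:ℝ)⁻¹ * ∑ j, f (x' j) - (n:ℝ)⁻¹ * ∑ j, f (x j) ≤ (n:ℝ)⁻¹ := by
        rw [← mul_sub, hsum]
        have h1 := (hFrange f hf (x' i)).2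
        have h2 := (hFrange f hf (x i)).1
        calc (n:ℝ)⁻¹ * (f (x' i) - f (x i)) ≤ (n:ℝ)⁻¹ * 1 :=
              mul_le_mul_of_nonneg_left (by linarith) (inv_pos.mpr hn').le
          _ = (n:ℝ)⁻¹ := mul_one _
      have hsup := Finset.le_sup'
        (fun f => (∫ z, f z ∂μ) - (n:ℝ)⁻¹ * ∑ j, f (x' j)) hf
      calc (∫ z, f z ∂μ) - (n:ℝ)⁻¹ * ∑ j, f (x j)
          = ((∫ z, f z ∂μ) - (n:ℝ)⁻¹ * ∑ j, f (x' j))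
            + ((n:ℝ)⁻¹ * ∑ j, f (x' j) - (n:ℝ)⁻¹ * ∑ j, f (x j)) := by ring
        _ ≤ g x' + (n:ℝ)⁻¹ := add_le_add hsup hA
    linarith
  have hsymm : ∫ x, g x ∂ν ≤ (2 / n) * ER :=
    symmetrization μ n hn F hFne hFmeas hFrange
  -- event set
  set A : Set (Fin n → 𝒳) := {x | ∀ f ∈ F, (∫ z, f z ∂μ) ≤
    (n:ℝ)⁻¹ * ∑ i, f (x i) + (2 / n) * ER + tval} with hA
  have hAmeas : MeasurableSet A := by
    have hAeq : A = ⋂ f ∈ F, {x : Fin n → 𝒳 | (∫ z, f z ∂μ) ≤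
        (n:ℝ)⁻¹ * ∑ i, f (x i) + (2 / n) * ER + tval} := by
      ext x; simp [hA, Set.mem_iInter]
    rw [hAeq]
    refine MeasurableSet.biInter F.countable_toSet fun f hf => ?_
    exact measurableSet_le measurable_const
      ((((Finset.measurable_sum Finset.univ fun i _ =>
        (hFmeas f hf).comp (measurable_pi_apply i)).const_mul _).add_const _).add_const _)
  -- event equals preimage
  have hsetEq : {ω | ∀ f ∈ F,
        (∫ ω', f (X ⟨0, hn⟩ ω') ∂P) ≤
          (n : ℝ)⁻¹ * ∑ i, f (X i ω)
          + (2 / n) * (∫ ω'', (2 ^ n : ℝ)⁻¹ * ∑ ε : Fin n → Bool,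
              F.sup' hFne (fun f => ∑ i, (if ε i then (1 : ℝ) else -1) * f (X i ω'')) ∂P)
          + Real.sqrt (Real.log (1 / δ) / (2 * n))} = T ⁻¹' A := by
    have hc2 : ∫ ω'', (2 ^ n : ℝ)⁻¹ * ∑ ε : Fin n → Bool,
        F.sup' hFne (fun f => ∑ i, (if ε i then (1 : ℝ) else -1) * f (X i ω'')) ∂P = ER := by
      rw [hER]
      conv_rhs => rw [← hTmap]
      rw [integral_map hTmeas.aemeasurable (by rw [hTmap]; exact hR'meas.aestronglyMeasurable)]
    ext ω
    simp only [Set.mem_setOf_eq, Set.mem_preimage, hA]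
    refine forall₂_congr fun f hf => ?_
    have hc1 : ∫ ω', f (X ⟨0, hn⟩ ω') ∂P = ∫ z, f z ∂μ := by
      rw [hμ, integral_map (hXmeas _).aemeasurable
        (by rw [← hμ]; exact (hFmeas f hf).aestronglyMeasurable)]
    rw [hc1, hc2]
  have hPA : P (T ⁻¹' A) = ν A := by
    rw [← hTmap]; exact (Measure.map_apply hTmeas hAmeas).symm
  rw [hsetEq, hPA]
  -- tail bound
  have hcompl : Aᶜ ⊆ {x | (∫ y, g y ∂ν) + tval ≤ g x} := by
    intro x hx
    simp only [hA, Set.mem_compl_iff, Set.mem_setOf_eq] at hx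
    push_neg at hx
    obtain ⟨f, hf, hlt⟩ := hx
    have h1 : (∫ z, f z ∂μ) - (n:ℝ)⁻¹ * ∑ i, f (x i) ≤ g x :=
      Finset.le_sup' (fun f => (∫ z, f z ∂μ) - (n:ℝ)⁻¹ * ∑ i, f (x i)) hf
    simp only [Set.mem_setOf_eq]
    linarith
  set l : ℝ := 4 * (n:ℝ) * tval with hl
  have htail := mcdiarmid_tail μ (n:ℝ)⁻¹ 2 (inv_nonneg.mpr hn'.le) n g hgmeas hgbd hgdiff
    tval l (by positivity)
  have harg : 0 ≤ Real.log (1 / δ) / (2 * n) :=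
    div_nonneg (Real.log_nonneg (one_le_one_div hδ hδ1.le)) (by positivity)
  have htsq : tval ^ 2 = Real.log (1 / δ) / (2 * n) := Real.sq_sqrt harg
  have hexp : Real.exp (-l * tval + n * (l ^ 2 * ((n:ℝ)⁻¹) ^ 2 / 8)) = δ := by
    have hexparg : -l * tval + (n:ℝ) * (l ^ 2 * ((n:ℝ)⁻¹) ^ 2 / 8)
        = -(2 * n * tval ^ 2) := by
      rw [hl]; field_simp; ring
    rw [hexparg, htsq]
    have h2 : -(2 * (n:ℝ) * (Real.log (1 / δ) / (2 * n))) = Real.log δ := by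
      rw [one_div, Real.log_inv]
      field_simp
    rw [h2, Real.exp_log hδ]
  have hcomplle : ν Aᶜ ≤ ENNReal.ofReal δ := by
    calc ν Aᶜ ≤ ν {x | (∫ y, g y ∂ν) + tval ≤ g x} := measure_mono hcompl
      _ ≤ ENNReal.ofReal (Real.exp (-l * tval + n * (l ^ 2 * ((n:ℝ)⁻¹) ^ 2 / 8))) := htail
      _ = ENNReal.ofReal δ := by rw [hexp]
  calc ENNReal.ofReal (1 - δ) = 1 - ENNReal.ofReal δ := by
        rw [ENNReal.ofReal_sub 1 hδ.le, ENNReal.ofReal_one]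
    _ ≤ 1 - ν Aᶜ := tsub_le_tsub_left hcomplle 1
    _ ≤ ν A := by
        rw [tsub_le_iff_right]
        exact le_of_eq (prob_add_prob_compl hAmeas).symm
end
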